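/- If h and k are positive, coprime integers, then T(h,k) = (1 + (-1)^{k+h})·S(h,k) + (-1)^{k+h+1}. -/

import Mathlib

/-- `S(h,k) := ∑_{j=1}^{k-1} (-1)^{j+1+⌊hj/k⌋}`. -/
def Spair (h k : ℕ) : ℤ := ∑ j ∈ Finset.Icc 1 (k - 1), (-1 : ℤ) ^ (j + 1 + h * j / k)

/-- `T(h,k) := ∑_{j=1}^{2k-1} (-1)^{j+1+⌊hj/k⌋}`. -/
def Tpair (h k : ℕ) : ℤ := ∑ j ∈ Finset.Icc 1 (2 * k - 1), (-1 : ℤ) ^ (j + 1 + h * j / k)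

theorem stmt_12 (h k : ℕ) (hh : 0 < h) (hk : 0 < k) (hcop : Nat.Coprime h k) :
    Tpair h k = (1 + (-1 : ℤ) ^ (k + h)) * Spair h k + (-1 : ℤ) ^ (k + h + 1) := by
  have hsplit : Finset.Icc 1 (2*k-1) = Finset.Icc 1 (k-1) ∪ Finset.Icc k (2*k-1) := by
    ext j; simp only [Finset.mem_Icc, Finset.mem_union]; omega
  have hdisj : Disjoint (Finset.Icc 1 (k-1)) (Finset.Icc k (2*k-1)) := by
    rw [Finset.disjoint_left]; intro a ha hb
    simp only [Finset.mem_Icc] at ha hb; omega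
  rw [Tpair, hsplit, Finset.sum_union hdisj]
  have hmap : Finset.Icc k (2*k-1) = Finset.map (addLeftEmbedding k) (Finset.Icc 0 (k-1)) := by
    rw [Finset.map_add_left_Icc]; congr 1 <;> omega
  rw [hmap, Finset.sum_map]
  have hterm : ∀ m ∈ Finset.Icc 0 (k-1),
      (-1:ℤ)^((addLeftEmbedding k m) + 1 + h * (addLeftEmbedding k m) / k)
        = (-1:ℤ)^(k+h) * (-1:ℤ)^(m + 1 + h*m/k) := by
    intro m _
    have hdiv : h * (k + m) / k = h + h*m/k := by
      rw [Nat.mul_add, mul_comm h k, Nat.mul_add_div hk]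
    simp only [addLeftEmbedding_apply]
    rw [hdiv, ← pow_add]
    congr 1; ring
  rw [Finset.sum_congr rfl hterm, ← Finset.mul_sum]
  have h0 : Finset.Icc 0 (k-1) = insert 0 (Finset.Icc 1 (k-1)) := by
    ext j; simp only [Finset.mem_Icc, Finset.mem_insert]; omega
  rw [h0, Finset.sum_insert (by simp)]
  rw [← Spair]
  simp only [Nat.mul_zero, Nat.zero_div, Nat.zero_add, Nat.add_zero, pow_one, pow_succ]
  ring
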